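/- Let X be a metric space, m ≥ 1 a natural number, and C_0, C_1, …, C_m nonempty subsets of X. Suppose that for each k with 0 < k < m there exist disjoint open sets U_k and V_k with X \ C_k = U_k ∪ V_k, with C_j ⊆ U_k for all j < k and C_j ⊆ V_k for all j > k. Then for every continuous map γ : ℝ → X with γ 0 ∈ C_0 and γ 1 ∈ C_m, the total variation of γ on the interval [0,1] is at least Σ_{k=0}^{m−1} d(C_k, C_{k+1}), where d(A,B) = inf { dist a b : a ∈ A, b ∈ B }. -/

import Mathlib

/-- The distance between two sets: `inf { dist a b : a ∈ A, b ∈ B }`. -/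
noncomputable def setDist {X : Type*} [MetricSpace X] (A B : Set X) : ℝ :=
  sInf {d : ℝ | ∃ a ∈ A, ∃ b ∈ B, d = dist a b}

lemma setDist_le' {X : Type*} [MetricSpace X] {A B : Set X} {a b : X} (ha : a ∈ A) (hb : b ∈ B) :
    setDist A B ≤ dist a b := by
  apply csInf_le
  · exact ⟨0, by rintro d ⟨x, _, y, _, rfl⟩; exact dist_nonneg⟩
  · exact ⟨a, ha, b, hb, rfl⟩

lemma setDist_nonneg' {X : Type*} [MetricSpace X] (A B : Set X) : 0 ≤ setDist A B := by
  apply Real.sInf_nonneg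
  rintro d ⟨x, _, y, _, rfl⟩; exact dist_nonneg

/-- Crossing lemma: a path going from U to V must cross the separating set. -/
lemma crossing' {X : Type*} [MetricSpace X] {U V S : Set X} (hU : IsOpen U) (hV : IsOpen V)
    (hd : Disjoint U V) (hcomp : Sᶜ = U ∪ V) {γ : ℝ → X} (hγ : Continuous γ)
    {a b : ℝ} (hab : a ≤ b) (ha : γ a ∈ U) (hb : γ b ∈ V) :
    ∃ t ∈ Set.Icc a b, γ t ∈ S := by
  by_contra hc
  push_neg at hc
  have hsub : Set.Icc a b ⊆ γ ⁻¹' U ∪ γ ⁻¹' V := by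
    intro t ht
    have : γ t ∈ Sᶜ := hc t ht
    rw [hcomp] at this
    exact this
  obtain ⟨t, -, htU, htV⟩ := isPreconnected_Icc (γ ⁻¹' U) (γ ⁻¹' V)
    (hU.preimage hγ) (hV.preimage hγ) hsub
    ⟨a, Set.left_mem_Icc.2 hab, ha⟩ ⟨b, Set.right_mem_Icc.2 hab, hb⟩
  exact hd.ne_of_mem htU htV rfl

/-- If each intermediate set C_k separates the earlier sets from the later ones, then
any continuous path from C_0 to C_m has total variation on [0,1] at least the sum of
the distances between consecutive sets. -/
theorem totalVariation_ge_sum_setDist {X : Type*} [MetricSpace X] (m : ℕ) (hm : 1 ≤ m)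
    (C : ℕ → Set X) (hCne : ∀ k ≤ m, (C k).Nonempty)
    (hsep : ∀ k, 0 < k → k < m → ∃ U V : Set X, IsOpen U ∧ IsOpen V ∧
      Disjoint U V ∧ (C k)ᶜ = U ∪ V ∧
      (∀ j, j < k → C j ⊆ U) ∧ (∀ j, k < j → j ≤ m → C j ⊆ V))
    (γ : ℝ → X) (hγ : Continuous γ) (h0 : γ 0 ∈ C 0) (h1 : γ 1 ∈ C m) :
    ENNReal.ofReal (∑ k ∈ Finset.range m, setDist (C k) (C (k + 1))) ≤
      eVariationOn γ (Set.Icc 0 1) := by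
  have key : ∀ k, k < m → ∃ u : ℕ → ℝ, Monotone u ∧ (∀ i, u i ∈ Set.Icc (0:ℝ) 1) ∧
      (∀ i, i ≤ k → γ (u i) ∈ C i) ∧ (∀ i, k ≤ i → u i = u k) := by
    intro k
    induction k with
    | zero =>
      intro _
      exact ⟨fun _ => 0, monotone_const, fun _ => ⟨le_refl 0, zero_le_one⟩,
        fun i hi => by simpa [Nat.le_zero.mp hi] using h0, fun _ _ => rfl⟩
    | succ k ih =>
      intro hk1
      obtain ⟨u, hmono, hmem, hC, hconst⟩ := ih (lt_trans (Nat.lt_succ_self k) hk1)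
      obtain ⟨U, V, hU, hV, hd, hcomp, hUj, hVj⟩ := hsep (k + 1) (Nat.succ_pos k) hk1
      have huk : γ (u k) ∈ U := hUj k (Nat.lt_succ_self k) (hC k le_rfl)
      have h1V : γ 1 ∈ V := hVj m hk1 le_rfl h1
      obtain ⟨t, ht, htC⟩ := crossing' hU hV hd hcomp hγ (hmem k).2 huk h1V
      have hukt : u k ≤ t := ht.1
      refine ⟨fun i => if i ≤ k then u i else t, ?_, ?_, ?_, ?_⟩
      · intro i j hij
        by_cases hi : i ≤ k <;> by_cases hj : j ≤ k <;> simp only [hi, hj, if_true, if_false,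
          if_pos, if_neg, reduceIte]
        · exact hmono hij
        · exact le_trans (hmono hi) hukt
        · omega
        · exact le_refl t
      · intro i; by_cases hi : i ≤ k <;> simp only [hi, reduceIte]
        · exact hmem i
        · exact ⟨le_trans (hmem 0).1 (le_trans (hmono (Nat.zero_le k)) hukt), ht.2⟩
      · intro i hi
        by_cases h : i ≤ k
        · simpa [h] using hC i h
        · have : i = k + 1 := by omega
          subst this
          simpa [Nat.not_succ_le_self k] using htC
      · intro i hi
        have h1' : ¬ i ≤ k := by omega
        simp [h1', Nat.not_succ_le_self k]
  obtain ⟨u, hmono, hmem, hC, -⟩ := key (m - 1) (by omega)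
  -- Final sequence: v i = if i < m then u i else 1
  set v : ℕ → ℝ := fun i => if i < m then u i else 1 with hv
  have hvmono : Monotone v := by
    intro i j hij
    by_cases hi : i < m <;> by_cases hj : j < m <;>
      simp only [hv, hi, hj, reduceIte]
    · exact hmono hij
    · exact (hmem i).2
    · omega
    · exact le_refl 1
  have hvmem : ∀ i, v i ∈ Set.Icc (0:ℝ) 1 := by
    intro i
    by_cases hi : i < m <;> simp only [hv, hi, reduceIte]
    · exact hmem i
    · exact ⟨zero_le_one, le_refl 1⟩
  have hvC : ∀ i, i ≤ m → γ (v i) ∈ C i := by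
    intro i hi
    by_cases h : i < m
    · simpa [hv, h] using hC i (by omega)
    · have : i = m := by omega
      subst this
      simpa [hv] using h1
  calc ENNReal.ofReal (∑ k ∈ Finset.range m, setDist (C k) (C (k + 1)))
      = ∑ k ∈ Finset.range m, ENNReal.ofReal (setDist (C k) (C (k + 1))) := by
        exact ENNReal.ofReal_sum_of_nonneg fun k _ => setDist_nonneg' _ _
    _ ≤ ∑ k ∈ Finset.range m, edist (γ (v (k + 1))) (γ (v k)) := by
        apply Finset.sum_le_sum
        intro k hk
        rw [Finset.mem_range] at hk
        rw [edist_dist, dist_comm]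
        exact ENNReal.ofReal_le_ofReal
          (setDist_le' (hvC k (by omega)) (hvC (k + 1) (by omega)))
    _ ≤ eVariationOn γ (Set.Icc 0 1) := eVariationOn.sum_le (f := γ) (n := m) hvmono hvmem
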